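/- Let $f : X \to Y$ be a Krasinkiewicz map of compact metric spaces, and let $C(f)$ denote the union of all nondegenerate connected components of the fibers of $f$. Then there exist compact subsets $A_1, A_2, \ldots \subseteq X$ such that $C(f) = \bigcup_{i=1}^{\infty} A_i$ and every connected component of each $A_i$ is contained in a single fiber of $f$. -/

import Mathlib

open Set Metric

/-- A map is Krasinkiewicz if every continuum in `X` either contains a connected
component of a fiber or is contained in a connected component of a fiber. -/
def IsKrasinkiewicz {X Y : Type*} [TopologicalSpace X] [TopologicalSpace Y] (f : X → Y) : Prop :=
  ∀ F : Set X, IsCompact F → IsConnected F →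
    (∃ x : X, connectedComponentIn (f ⁻¹' {f x}) x ⊆ F) ∨
    (∃ x : X, F ⊆ connectedComponentIn (f ⁻¹' {f x}) x)

/-- In a compact Hausdorff space, if the connected component of a point is contained in an
open set, then there is a clopen set between them. -/
lemma exists_isClopen_of_connectedComponent_subset {Z : Type*} [TopologicalSpace Z] [T2Space Z]
    [CompactSpace Z] (x : Z) {U : Set Z} (hU : IsOpen U) (hxU : connectedComponent x ⊆ U) :
    ∃ V : Set Z, IsClopen V ∧ x ∈ V ∧ V ⊆ U := by
  have hcc := connectedComponent_eq_iInter_isClopen x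
  have hempty : (Uᶜ ∩ ⋂ s : { s : Set Z // IsClopen s ∧ x ∈ s }, (s : Set Z)) = ∅ := by
    rw [← hcc, Set.eq_empty_iff_forall_notMem]
    rintro z ⟨hz1, hz2⟩
    exact hz1 (hxU hz2)
  obtain ⟨t, ht⟩ := (hU.isClosed_compl.isCompact).elim_finite_subfamily_closed
      (fun s : { s : Set Z // IsClopen s ∧ x ∈ s } => (s : Set Z))
      (fun s => s.2.1.1) hempty
  refine ⟨⋂ s ∈ t, (s : Set Z), isClopen_biInter_finset (fun s _ => s.2.1),
      mem_iInter₂.mpr (fun s _ => s.2.2), ?_⟩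
  intro z hz
  by_contra hzU
  exact absurd ht (Set.Nonempty.ne_empty ⟨z, hzU, hz⟩)

/-- The set of points whose fiber-component has diameter at least `ε` is closed. -/
lemma isClosed_diam_ge_fiber {X Y : Type*} [MetricSpace X] [CompactSpace X] [MetricSpace Y]
    (f : C(X, Y)) (ε : ℝ) :
    IsClosed {x : X | ε ≤ diam (connectedComponentIn (⇑f ⁻¹' {f x}) x)} := by
  rw [← isOpen_compl_iff, isOpen_iff_mem_nhds]
  intro x hx
  simp only [mem_compl_iff, mem_setOf_eq, not_le] at hx
  set F : Set X := ⇑f ⁻¹' {f x} with hFdef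
  have hxF : x ∈ F := rfl
  have hFclosed : IsClosed F := isClosed_singleton.preimage f.continuous
  set K := connectedComponentIn F x with hKdef
  have hKne : K.Nonempty := ⟨x, mem_connectedComponentIn hxF⟩
  set η0 : ℝ := (ε - diam K) / 8 with hη0def
  have hη0pos : 0 < η0 := by simp only [hη0def]; linarith
  haveI : CompactSpace F := isCompact_iff_compactSpace.mp hFclosed.isCompact
  have himg : K = (↑) '' connectedComponent (⟨x, hxF⟩ : F) := connectedComponentIn_eq_image hxF
  have hsubV0 : connectedComponent (⟨x, hxF⟩ : F) ⊆ (↑) ⁻¹' (thickening η0 K) := by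
    intro z hz
    have hzK : (z : X) ∈ K := himg ▸ mem_image_of_mem _ hz
    exact self_subset_thickening hη0pos K hzK
  obtain ⟨V, hVclopen, hxV, hVsub⟩ := exists_isClopen_of_connectedComponent_subset
      (⟨x, hxF⟩ : F) (isOpen_thickening.preimage continuous_subtype_val) hsubV0
  set U : Set X := (↑) '' V with hUdef
  set W : Set X := (↑) '' (Vᶜ) with hWdef
  have hUc : IsCompact U := (hVclopen.isClosed.isCompact).image continuous_subtype_val
  have hWc : IsCompact W := ((hVclopen.compl).isClosed.isCompact).image continuous_subtype_val
  have hUW : Disjoint U W :=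
    Set.disjoint_image_of_injective Subtype.val_injective disjoint_compl_right
  have hFUW : F ⊆ U ∪ W := by
    intro z hz
    rcases em ((⟨z, hz⟩ : F) ∈ V) with h | h
    · exact Or.inl ⟨⟨z, hz⟩, h, rfl⟩
    · exact Or.inr ⟨⟨z, hz⟩, h, rfl⟩
  have hUV0 : U ⊆ thickening η0 K := by
    rintro _ ⟨z, hz, rfl⟩
    exact hVsub hz
  have hdiamU : diam U ≤ diam K + 2 * η0 :=
    le_trans (diam_mono hUV0 isBounded_of_compactSpace) (diam_thickening_le _ hη0pos.le)
  obtain ⟨δ, hδpos, hδ⟩ := hUc.exists_thickening_subset_open hWc.isClosed.isOpen_compl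
      hUW.subset_compl_right
  set η : ℝ := min (δ / 3) ((ε - (diam K + 2 * η0)) / 4) with hηdef
  have hε' : diam K + 2 * η0 < ε := by simp only [hη0def]; linarith
  have hηpos : 0 < η := lt_min (by linarith) (by linarith)
  have hηle : η ≤ (ε - (diam K + 2 * η0)) / 4 := min_le_right _ _
  have hηle' : η ≤ δ / 3 := min_le_left _ _
  set O1 := thickening η U with hO1def
  set O2 := thickening η W with hO2def
  have hO12 : Disjoint O1 O2 := by
    rw [Set.disjoint_left]
    intro z hz1 hz2
    obtain ⟨a, ha, hza⟩ := mem_thickening_iff.mp hz1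
    obtain ⟨w, hw, hzw⟩ := mem_thickening_iff.mp hz2
    have hwδ : w ∈ thickening δ U := mem_thickening_iff.mpr ⟨a, ha, by
      have := dist_triangle w z a
      have h1 : dist z w = dist w z := dist_comm z w
      linarith [hzw, hza]⟩
    exact (hδ hwδ) hw
  have hxU : x ∈ U := ⟨⟨x, hxF⟩, hxV, rfl⟩
  have hxO1 : x ∈ O1 := self_subset_thickening hηpos _ hxU
  set G := (⇑f '' (O1 ∪ O2)ᶜ)ᶜ with hGdef
  have hGopen : IsOpen G := by
    rw [hGdef, isOpen_compl_iff]
    exact (((isOpen_thickening.union isOpen_thickening).isClosed_compl).isCompact.image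
      f.continuous).isClosed
  have hfxG : f x ∈ G := by
    rintro ⟨z, hz, hfz⟩
    have hzF : z ∈ F := by
      simp only [hFdef, mem_preimage, mem_singleton_iff, hfz]
    refine hz ?_
    rcases hFUW hzF with h | h
    · exact Or.inl (self_subset_thickening hηpos _ h)
    · exact Or.inr (self_subset_thickening hηpos _ h)
  refine Filter.mem_of_superset
      (((isOpen_thickening (δ := η) (E := U)).inter (hGopen.preimage f.continuous)).mem_nhds
        ⟨hxO1, hfxG⟩) ?_
  rintro x' ⟨hx'O1, hx'G⟩
  simp only [mem_compl_iff, mem_setOf_eq, not_le]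
  set F' : Set X := ⇑f ⁻¹' {f x'} with hF'def
  have hF'sub : F' ⊆ O1 ∪ O2 := by
    intro z hz
    by_contra hzc
    exact hx'G ⟨z, hzc, by simpa [hF'def] using hz⟩
  have hsub1 : connectedComponentIn F' x' ⊆ O1 :=
    (isPreconnected_connectedComponentIn).subset_left_of_subset_union
      isOpen_thickening isOpen_thickening hO12
      ((connectedComponentIn_subset _ _).trans hF'sub)
      ⟨x', mem_connectedComponentIn rfl, hx'O1⟩
  calc diam (connectedComponentIn F' x')
      ≤ diam O1 := diam_mono hsub1 isBounded_of_compactSpace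
    _ ≤ diam U + 2 * η := diam_thickening_le _ hηpos.le
    _ ≤ (diam K + 2 * η0) + 2 * η := by linarith
    _ < ε := by linarith

theorem krasinkiewicz_union_decomposition {X Y : Type*} [MetricSpace X] [CompactSpace X]
    [MetricSpace Y] [CompactSpace Y] (f : C(X, Y)) (hf : IsKrasinkiewicz ⇑f) :
    ∃ A : ℕ → Set X, (∀ i, IsCompact (A i)) ∧
      {x : X | ¬ (connectedComponentIn (⇑f ⁻¹' {f x}) x).Subsingleton} = ⋃ i, A i ∧
      ∀ i, ∀ x ∈ A i, ∃ y : Y, connectedComponentIn (A i) x ⊆ ⇑f ⁻¹' {y} := by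
  rcases isEmpty_or_nonempty X with hX | hX
  · refine ⟨fun _ => ∅, fun _ => isCompact_empty, ?_, ?_⟩
    · have h1 : {x : X | ¬ (connectedComponentIn (⇑f ⁻¹' {f x}) x).Subsingleton} = ∅ :=
        Set.eq_empty_of_isEmpty _
      exact h1.trans Set.iUnion_empty.symm
    · intro i x hx
      exact absurd hx (notMem_empty x)
  · haveI : TopologicalSpace.SeparableSpace X :=
      TopologicalSpace.isSeparable_univ_iff.mp isCompact_univ.isSeparable
    obtain ⟨u, hu⟩ := TopologicalSpace.exists_dense_seq X
    set S : ℕ → Set X := fun n =>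
      {x : X | 1 / ((n : ℝ) + 1) ≤ diam (connectedComponentIn (⇑f ⁻¹' {f x}) x)} with hSdef
    set r : ℕ → ℝ := fun n => (1 / ((n : ℝ) + 1)) / 4 with hrdef
    have hrpos : ∀ n, 0 < r n := fun n => by simp only [hrdef]; positivity
    set A : ℕ → Set X := fun i => S i.unpair.1 ∩ closedBall (u i.unpair.2) (r i.unpair.1)
      with hAdef
    have hAcompact : ∀ i, IsCompact (A i) := by
      intro i
      exact (((isClosed_diam_ge_fiber f (1 / ((i.unpair.1 : ℝ) + 1))).inter
        Metric.isClosed_closedBall)).isCompact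
    refine ⟨A, hAcompact, ?_, ?_⟩
    · ext x
      simp only [mem_setOf_eq, mem_iUnion]
      constructor
      · intro hx
        obtain ⟨a, ha, b, hb, hab⟩ := Set.not_subsingleton_iff.mp hx
        have hd : 0 < diam (connectedComponentIn (⇑f ⁻¹' {f x}) x) :=
          lt_of_lt_of_le (dist_pos.mpr hab)
            (dist_le_diam_of_mem isBounded_of_compactSpace ha hb)
        obtain ⟨n, hn⟩ := exists_nat_one_div_lt hd
        obtain ⟨k, hk⟩ := hu.exists_dist_lt x (hrpos n)
        refine ⟨Nat.pair n k, ?_⟩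
        simp only [hAdef, Nat.unpair_pair, mem_inter_iff, hSdef, mem_setOf_eq]
        exact ⟨hn.le, mem_closedBall.mpr hk.le⟩
      · rintro ⟨i, hi⟩ hsub
        have h1 : 1 / ((i.unpair.1 : ℝ) + 1) ≤
            diam (connectedComponentIn (⇑f ⁻¹' {f x}) x) := hi.1
        rw [Metric.diam_subsingleton hsub] at h1
        have h0 : (0 : ℝ) < 1 / ((i.unpair.1 : ℝ) + 1) := by positivity
        linarith
    · intro i x hx
      have hK : IsCompact (connectedComponentIn (A i) x) := by
        haveI : CompactSpace (A i) := isCompact_iff_compactSpace.mp (hAcompact i)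
        rw [connectedComponentIn_eq_image hx]
        exact (isClosed_connectedComponent.isCompact).image continuous_subtype_val
      have hconn : IsConnected (connectedComponentIn (A i) x) :=
        isConnected_connectedComponentIn_iff.mpr hx
      rcases hf _ hK hconn with ⟨x', hx'⟩ | ⟨x', hx'⟩
      · exfalso
        have hx'K : x' ∈ connectedComponentIn (A i) x := hx' (mem_connectedComponentIn rfl)
        have hx'A : x' ∈ A i := connectedComponentIn_subset _ _ hx'K
        have h1 : 1 / ((i.unpair.1 : ℝ) + 1) ≤
            diam (connectedComponentIn (⇑f ⁻¹' {f x'}) x') := hx'A.1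
        have h2 : connectedComponentIn (⇑f ⁻¹' {f x'}) x' ⊆
            closedBall (u i.unpair.2) (r i.unpair.1) :=
          hx'.trans ((connectedComponentIn_subset _ _).trans (fun z hz => hz.2))
        have h3 : diam (connectedComponentIn (⇑f ⁻¹' {f x'}) x') ≤ 2 * r i.unpair.1 :=
          le_trans (diam_mono h2 isBounded_of_compactSpace)
            (diam_closedBall (hrpos i.unpair.1).le)
        have h0 : (0 : ℝ) < 1 / ((i.unpair.1 : ℝ) + 1) := by positivity
        have hr2 : 2 * r i.unpair.1 = (1 / ((i.unpair.1 : ℝ) + 1)) / 2 := by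
          simp only [hrdef]; ring
        rw [hr2] at h3
        linarith
      · exact ⟨f x', hx'.trans (connectedComponentIn_subset _ _)⟩
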